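/- Fix an integer p ≥ 1, i ∈ {1,…,p}, n ≥ 0 and u ∈ X^n. Let m be the largest integer 0 ≤ m ≤ n such that the first m letters of u all lie in {0,i}. Then the orbit of u under the cyclic group generated by the permutation e_i^{(n)} equals { v ∈ X^n : v_j ∈ {0,i} for all 1 ≤ j ≤ m, and v_j = u_j for all m < j ≤ n }; in particular this orbit has exactly 2^m elements. -/

import Mathlib

/-- The action of the generator `e_i` of the star automaton group `𝒢_{S_p}` on
words of length `n` over the alphabet `X = {0, 1, …, p}`. -/
def starWord (p : ℕ) (i : Fin (p + 1)) : (n : ℕ) → (Fin n → Fin (p + 1)) → Fin n → Fin (p + 1)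
  | 0, w => w
  | n + 1, w =>
    if w 0 = 0 then Fin.cons i (starWord p i n (Fin.tail w))
    else if w 0 = i then Fin.cons 0 (Fin.tail w)
    else w

/-- Binary value of the first `m` letters (digit `0` counts as bit 1, anything else as bit 0). -/
def starVal (p : ℕ) : (n : ℕ) → ℕ → (Fin n → Fin (p + 1)) → ℕ
  | 0, _, _ => 0
  | _ + 1, 0, _ => 0
  | n + 1, m + 1, v => (if v 0 = 0 then 1 else 0) + 2 * starVal p n m (Fin.tail v)

lemma starVal_lt (p : ℕ) : ∀ (n m : ℕ) (v : Fin n → Fin (p + 1)), starVal p n m v < 2 ^ m := by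
  intro n
  induction n with
  | zero => intro m v; simp [starVal, Nat.pow_pos, Nat.two_pow_pos]
  | succ n ih =>
    intro m v
    cases m with
    | zero => simp [starVal]
    | succ m =>
      have := ih m (Fin.tail v)
      simp only [starVal, pow_succ]
      split <;> omega

lemma star_step (p : ℕ) (i : Fin (p + 1)) (hi : i ≠ 0) :
    ∀ (n m : ℕ), m ≤ n → ∀ (v : Fin n → Fin (p + 1)),
    (∀ j : Fin n, (j : ℕ) < m → v j = 0 ∨ v j = i) →
    (∀ h : m < n, ¬(v ⟨m, h⟩ = 0 ∨ v ⟨m, h⟩ = i)) →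
    (∀ j : Fin n, (j : ℕ) < m → starWord p i n v j = 0 ∨ starWord p i n v j = i) ∧
    (∀ j : Fin n, m ≤ (j : ℕ) → starWord p i n v j = v j) ∧
    starVal p n m (starWord p i n v) = (starVal p n m v + 1) % 2 ^ m := by
  intro n
  induction n with
  | zero =>
    intro m hm v _ _
    interval_cases m
    refine ⟨fun j hj => absurd j.isLt (by omega), fun j _ => rfl, by simp [starVal]⟩
  | succ n ih =>
    intro m hm v hpre hstop
    cases m with
    | zero =>
      have h0 := hstop (Nat.succ_pos n)
      push_neg at h0
      have hv0 : (⟨0, Nat.succ_pos n⟩ : Fin (n + 1)) = 0 := rfl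
      rw [hv0] at h0
      have hw : starWord p i (n + 1) v = v := by
        simp only [starWord, if_neg h0.1, if_neg h0.2]
      refine ⟨fun j hj => absurd hj (by omega), fun j _ => by rw [hw], ?_⟩
      simp [starVal]
    | succ m =>
      have h0 : v 0 = 0 ∨ v 0 = i := hpre 0 (Nat.succ_pos m)
      rcases h0 with h0 | h0
      · -- carry case
        have hw : starWord p i (n + 1) v = Fin.cons i (starWord p i n (Fin.tail v)) := by
          simp only [starWord, if_pos h0]
        have hpre' : ∀ j : Fin n, (j : ℕ) < m → Fin.tail v j = 0 ∨ Fin.tail v j = i := by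
          intro j hj
          exact hpre j.succ (by simpa using Nat.succ_lt_succ hj)
        have hstop' : ∀ h : m < n, ¬(Fin.tail v ⟨m, h⟩ = 0 ∨ Fin.tail v ⟨m, h⟩ = i) := by
          intro h
          have := hstop (Nat.succ_lt_succ h)
          simpa [Fin.tail, Fin.succ] using this
        obtain ⟨A, B, C⟩ := ih m (Nat.le_of_succ_le_succ hm) (Fin.tail v) hpre' hstop'
        rw [hw]
        refine ⟨?_, ?_, ?_⟩
        · intro j hj
          rcases Fin.eq_zero_or_eq_succ j with rfl | ⟨k, rfl⟩
          · right; simp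
          · simp only [Fin.cons_succ]
            exact A k (by simp at hj; omega)
        · intro j hj
          rcases Fin.eq_zero_or_eq_succ j with rfl | ⟨k, rfl⟩
          · simp at hj
          · simp only [Fin.cons_succ]
            exact B k (by simp at hj; omega)
        · simp only [starVal, Fin.tail_cons, Fin.cons_zero, if_neg hi, if_pos h0, C, pow_succ]
          have h2m := Nat.mul_mod_mul_left 2 (starVal p n m (Fin.tail v) + 1) (2 ^ m)
          rw [show 1 + 2 * starVal p n m (Fin.tail v) + 1
              = 2 * (starVal p n m (Fin.tail v) + 1) by ring, Nat.mul_comm (2 ^ m) 2, h2m]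
          omega
      · -- no-carry case: v 0 = i, i ≠ 0
        have h0' : v 0 ≠ 0 := h0 ▸ hi
        have hw : starWord p i (n + 1) v = Fin.cons 0 (Fin.tail v) := by
          simp only [starWord, if_neg h0', if_pos h0]
        rw [hw]
        refine ⟨?_, ?_, ?_⟩
        · intro j hj
          rcases Fin.eq_zero_or_eq_succ j with rfl | ⟨k, rfl⟩
          · left; simp
          · simp only [Fin.cons_succ]
            exact hpre k.succ hj
        · intro j hj
          rcases Fin.eq_zero_or_eq_succ j with rfl | ⟨k, rfl⟩
          · simp at hj
          · simp only [Fin.cons_succ, Fin.tail]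
        · have hVlt := starVal_lt p n m (Fin.tail v)
          simp only [starVal, Fin.tail_cons, Fin.cons_zero, if_neg h0', pow_succ,
            eq_self_iff_true, if_true]
          rw [Nat.mod_eq_of_lt (by omega)]
          omega

lemma starWord_inj (p : ℕ) (i : Fin (p + 1)) (hi : i ≠ 0) :
    ∀ (n m : ℕ) (v w : Fin n → Fin (p + 1)),
    (∀ j : Fin n, (j : ℕ) < m → v j = 0 ∨ v j = i) →
    (∀ j : Fin n, (j : ℕ) < m → w j = 0 ∨ w j = i) →
    (∀ j : Fin n, m ≤ (j : ℕ) → v j = w j) →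
    starVal p n m v = starVal p n m w → v = w := by
  intro n
  induction n with
  | zero => intro m v w _ _ _ _; funext j; exact absurd j.isLt (by omega)
  | succ n ih =>
    intro m v w hv hw htail hval
    cases m with
    | zero => funext j; exact htail j (Nat.zero_le _)
    | succ m =>
      simp only [starVal] at hval
      have hlv := starVal_lt p n m (Fin.tail v)
      have hlw := starVal_lt p n m (Fin.tail w)
      have hbit : (v 0 = 0 ↔ w 0 = 0) ∧
          starVal p n m (Fin.tail v) = starVal p n m (Fin.tail w) := by
        by_cases hv0 : v 0 = 0 <;> by_cases hw0 : w 0 = 0 <;>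
          simp [hv0, hw0] at hval ⊢ <;> omega
      have h0 : v 0 = w 0 := by
        rcases hv 0 (Nat.succ_pos m) with h | h <;> rcases hw 0 (Nat.succ_pos m) with h' | h'
        · rw [h, h']
        · exact absurd (hbit.1.mp h) (h' ▸ hi)
        · exact absurd (hbit.1.mpr h') (h ▸ hi)
        · rw [h, h']
      have htl : Fin.tail v = Fin.tail w := by
        refine ih m (Fin.tail v) (Fin.tail w) ?_ ?_ ?_ hbit.2
        · intro j hj; exact hv j.succ (by simpa using Nat.succ_lt_succ hj)
        · intro j hj; exact hw j.succ (by simpa using Nat.succ_lt_succ hj)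
        · intro j hj; exact htail j.succ (by simpa using Nat.succ_le_succ hj)
      funext j
      refine Fin.cases h0 (fun k => congrFun htl k) j

theorem stmt15 (p : ℕ) (hp : 1 ≤ p) (i : Fin (p + 1)) (hi : i ≠ 0) (n : ℕ)
    (u : Fin n → Fin (p + 1)) (m : ℕ) (hmn : m ≤ n)
    (h1 : ∀ j : Fin n, (j : ℕ) < m → u j = 0 ∨ u j = i)
    (h2 : ∀ h : m < n, ¬(u ⟨m, h⟩ = 0 ∨ u ⟨m, h⟩ = i)) :
    ({v : Fin n → Fin (p + 1) | ∃ t : ℕ, (starWord p i n)^[t] u = v} =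
      {v : Fin n → Fin (p + 1) |
        (∀ j : Fin n, (j : ℕ) < m → v j = 0 ∨ v j = i) ∧
        (∀ j : Fin n, m ≤ (j : ℕ) → v j = u j)}) ∧
    Set.ncard {v : Fin n → Fin (p + 1) | ∃ t : ℕ, (starWord p i n)^[t] u = v} = 2 ^ m := by
  -- invariants of the iterates
  have key : ∀ t : ℕ,
      (∀ j : Fin n, (j : ℕ) < m → (starWord p i n)^[t] u j = 0 ∨ (starWord p i n)^[t] u j = i) ∧
      (∀ j : Fin n, m ≤ (j : ℕ) → (starWord p i n)^[t] u j = u j) ∧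
      starVal p n m ((starWord p i n)^[t] u) = (starVal p n m u + t) % 2 ^ m := by
    intro t
    induction t with
    | zero =>
      exact ⟨h1, fun j _ => rfl, (Nat.mod_eq_of_lt (starVal_lt p n m u)).symm⟩
    | succ t iht =>
      obtain ⟨A, B, C⟩ := iht
      set w := (starWord p i n)^[t] u with hwdef
      have hstop : ∀ h : m < n, ¬(w ⟨m, h⟩ = 0 ∨ w ⟨m, h⟩ = i) := by
        intro h hc
        exact h2 h (by rwa [B ⟨m, h⟩ le_rfl] at hc)
      obtain ⟨A', B', C'⟩ := star_step p i hi n m hmn w A hstop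
      rw [Function.iterate_succ_apply']
      refine ⟨A', fun j hj => (B' j hj).trans (B j hj), ?_⟩
      rw [C', C, Nat.mod_add_mod, Nat.add_assoc]
  have valkey : ∀ c : ℕ, c < 2 ^ m →
      starVal p n m ((starWord p i n)^[c + 2 ^ m - starVal p n m u] u) = c := by
    intro c hc
    have hul := starVal_lt p n m u
    rw [(key _).2.2]
    rw [show starVal p n m u + (c + 2 ^ m - starVal p n m u) = c + 2 ^ m by omega,
      Nat.add_mod_right, Nat.mod_eq_of_lt hc]
  have hset : {v : Fin n → Fin (p + 1) | ∃ t : ℕ, (starWord p i n)^[t] u = v} =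
      {v : Fin n → Fin (p + 1) |
        (∀ j : Fin n, (j : ℕ) < m → v j = 0 ∨ v j = i) ∧
        (∀ j : Fin n, m ≤ (j : ℕ) → v j = u j)} := by
    ext v
    constructor
    · rintro ⟨t, rfl⟩
      exact ⟨(key t).1, (key t).2.1⟩
    · rintro ⟨hv1, hv2⟩
      have hvlt := starVal_lt p n m v
      refine ⟨starVal p n m v + 2 ^ m - starVal p n m u, ?_⟩
      set t := starVal p n m v + 2 ^ m - starVal p n m u with ht
      obtain ⟨A, B, C⟩ := key t
      exact starWord_inj p i hi n m _ v A hv1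
        (fun j hj => (B j hj).trans (hv2 j hj).symm) (valkey _ hvlt)
  refine ⟨hset, ?_⟩
  rw [hset]
  set S := {v : Fin n → Fin (p + 1) |
        (∀ j : Fin n, (j : ℕ) < m → v j = 0 ∨ v j = i) ∧
        (∀ j : Fin n, m ≤ (j : ℕ) → v j = u j)} with hSdef
  have hbij : Function.Bijective
      (fun v : S => (⟨starVal p n m v.1, starVal_lt p n m v.1⟩ : Fin (2 ^ m))) := by
    constructor
    · rintro ⟨v, hv1, hv2⟩ ⟨w, hw1, hw2⟩ h
      simp only [Fin.mk.injEq] at h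
      have := starWord_inj p i hi n m v w hv1 hw1
        (fun j hj => (hv2 j hj).trans (hw2 j hj).symm) h
      exact Subtype.ext this
    · rintro ⟨c, hc⟩
      refine ⟨⟨(starWord p i n)^[c + 2 ^ m - starVal p n m u] u, ?_⟩, ?_⟩
      · exact ⟨(key _).1, (key _).2.1⟩
      · exact Fin.ext (valkey c hc)
  have hc : Nat.card S = 2 ^ m := by
    simpa using Nat.card_eq_of_bijective _ hbij
  rw [← Nat.card_coe_set_eq, hc]
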